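/- For every nonempty finite set X and every game g : 𝒫(X) → ℝ, the Shapley value satisfies Σ_{x∈X} (SV(g))(x) = g(X) − g(∅). -/

import Mathlib

open Finset

/-- The Shapley value of a game `g : 𝒫(X) → ℝ`:
`(SV g)(x) = (1/|X|!) ∑_{M ⊆ X, x ∈ M} (|M|-1)!(|X|-|M|)!(g(M) - g(M ∖ {x}))`. -/
noncomputable def SV {α : Type*} [Fintype α] [DecidableEq α]
    (g : Finset α → ℝ) (x : α) : ℝ :=
  (1 / (Nat.factorial (Fintype.card α) : ℝ)) *
    ∑ M ∈ Finset.univ.filter (fun M : Finset α => x ∈ M),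
      (Nat.factorial (M.card - 1) : ℝ) * (Nat.factorial (Fintype.card α - M.card) : ℝ) *
        (g M - g (M.erase x))

lemma reidx {α : Type*} [Fintype α] [DecidableEq α] (f : Finset α → α → ℝ) :
    ∑ M : Finset α, ∑ x ∈ M, f M x = ∑ N : Finset α, ∑ x ∈ Nᶜ, f (insert x N) x := by
  classical
  rw [Finset.sum_sigma' univ (fun M : Finset α => M) (fun M x => f M x), Finset.sum_sigma' univ (fun N : Finset α => Nᶜ) (fun N x => f (insert x N) x)]
  refine Finset.sum_nbij' (fun p => ⟨p.1.erase p.2, p.2⟩) (fun q => ⟨insert q.2 q.1, q.2⟩)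
    ?_ ?_ ?_ ?_ ?_
  · rintro ⟨M, x⟩ hp
    simp only [Finset.mem_sigma, Finset.mem_univ, true_and] at hp ⊢
    simp [Finset.mem_compl]
  · rintro ⟨N, x⟩ hq
    simp only [Finset.mem_sigma, Finset.mem_univ, true_and, Finset.mem_compl] at hq ⊢
    simp
  · rintro ⟨M, x⟩ hp
    simp only [Finset.mem_sigma, Finset.mem_univ, true_and] at hp
    simp [Finset.insert_erase hp]
  · rintro ⟨N, x⟩ hq
    simp only [Finset.mem_sigma, Finset.mem_univ, true_and, Finset.mem_compl] at hq
    simp [Finset.erase_insert hq]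
  · rintro ⟨M, x⟩ hp
    simp only [Finset.mem_sigma, Finset.mem_univ, true_and] at hp
    simp [Finset.insert_erase hp]

/-- For every game `g`, the Shapley values sum to `g(X) - g(∅)`. -/
theorem stmt6 {α : Type*} [Fintype α] [DecidableEq α] [Nonempty α]
    (g : Finset α → ℝ) :
    ∑ x : α, SV g x = g Finset.univ - g ∅ := by
  classical
  set n := Fintype.card α with hn
  have hn0 : 0 < n := Fintype.card_pos
  have hfac : (Nat.factorial n : ℝ) ≠ 0 := Nat.cast_ne_zero.mpr (Nat.factorial_pos n).ne'
  set w : ℕ → ℝ := fun k => (Nat.factorial (k - 1) : ℝ) * (Nat.factorial (n - k) : ℝ) with hw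
  have h1 : ∑ x : α, SV g x
      = (1 / (Nat.factorial n : ℝ)) *
        ∑ M : Finset α, ∑ x ∈ M, w M.card * (g M - g (M.erase x)) := by
    unfold SV
    rw [← Finset.mul_sum]
    congr 1
    refine Finset.sum_comm' (t' := Finset.univ) (s' := fun M : Finset α => M) ?_
    intro x M; simp
  rw [h1]
  have h2 : ∑ M : Finset α, ∑ x ∈ M, w M.card * (g M - g (M.erase x))
      = (∑ M : Finset α, (M.card : ℝ) * w M.card * g M)
        - ∑ M : Finset α, ((n : ℝ) - M.card) * w (M.card + 1) * g M := by
    have := reidx (α := α) (fun M x => w M.card * g (M.erase x))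
    simp only [mul_sub]
    simp only [Finset.sum_sub_distrib]
    congr 1
    · congr 1; funext M
      rw [Finset.sum_const, nsmul_eq_mul]; ring
    · rw [this]
      congr 1; funext N
      have hcins : ∀ x ∈ Nᶜ, ((insert x N).erase x = N ∧ (insert x N).card = N.card + 1) := by
        intro x hx
        rw [Finset.mem_compl] at hx
        exact ⟨Finset.erase_insert hx, Finset.card_insert_of_notMem hx⟩
      rw [Finset.sum_congr rfl (fun x hx => by rw [(hcins x hx).1, (hcins x hx).2]),
        Finset.sum_const, nsmul_eq_mul, Finset.card_compl,
        Nat.cast_sub (Finset.card_le_univ N)]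
      ring
  rw [h2, ← Finset.sum_sub_distrib]
  -- now combine coefficients
  have key : ∑ M : Finset α, ((M.card : ℝ) * w M.card * g M - ((n : ℝ) - M.card) * w (M.card + 1) * g M)
      = (Nat.factorial n : ℝ) * g Finset.univ - (Nat.factorial n : ℝ) * g ∅ := by
    set c : Finset α → ℝ := fun M => (M.card : ℝ) * w M.card - ((n : ℝ) - M.card) * w (M.card + 1) with hc
    have hzero : ∀ M : Finset α, M ≠ ∅ → M ≠ Finset.univ → c M = 0 := by
      intro M hM hMu
      have hk0 : 0 < M.card := Finset.card_pos.mpr (Finset.nonempty_iff_ne_empty.mpr hM)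
      have hkn : M.card < n := by
        have := Finset.card_lt_card (Finset.ssubset_univ_iff.mpr hMu)
        simpa [hn] using this
      set k := M.card
      have e1 : (k : ℝ) * ((k - 1).factorial : ℝ) = (k.factorial : ℝ) := by
        rw [← Nat.cast_mul, Nat.mul_factorial_pred hk0.ne']
      have e2 : ((n : ℝ) - k) * ((n - (k + 1)).factorial : ℝ) = ((n - k).factorial : ℝ) := by
        have h1 : n - (k + 1) = (n - k) - 1 := by omega
        have h2 : 0 < n - k := by omega
        rw [h1, ← Nat.cast_sub hkn.le, ← Nat.cast_mul, Nat.mul_factorial_pred h2.ne']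
      simp only [hc, hw, Nat.add_sub_cancel]
      linear_combination ((n - k).factorial : ℝ) * e1 - (k.factorial : ℝ) * e2
    have huniv : c Finset.univ = (Nat.factorial n : ℝ) := by
      simp only [hc, hw, Finset.card_univ, ← hn, Nat.sub_self, Nat.factorial_zero,
        Nat.cast_one, mul_one, sub_self, zero_mul, sub_zero]
      rw [← Nat.cast_mul, Nat.mul_factorial_pred hn0.ne']
    have hempty : c ∅ = -(Nat.factorial n : ℝ) := by
      simp only [hc, hw, Finset.card_empty, Nat.cast_zero, zero_mul, zero_sub, sub_zero,
        Nat.zero_add, Nat.sub_self, Nat.factorial_zero, Nat.cast_one, one_mul, neg_inj]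
      rw [← Nat.cast_mul]
      norm_num
      rw [← Nat.mul_factorial_pred hn0.ne']
      push_cast
      ring
    have hrw : ∀ M : Finset α, (M.card : ℝ) * w M.card * g M - ((n : ℝ) - M.card) * w (M.card + 1) * g M = c M * g M := by
      intro M; simp only [hc]; ring
    rw [Finset.sum_congr rfl (fun M _ => hrw M)]
    have hsub : ({∅, Finset.univ} : Finset (Finset α)) ⊆ Finset.univ := Finset.subset_univ _
    rw [← Finset.sum_subset hsub (fun M _ hM => by
      rw [hzero M (fun h => hM (by simp [h])) (fun h => hM (by simp [h])), zero_mul])]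
    have hne : (∅ : Finset α) ≠ Finset.univ := by
      intro h
      exact (Finset.univ_nonempty (α := α)).ne_empty h.symm
    rw [Finset.sum_pair hne, hempty, huniv]
    ring
  rw [key]
  field_simp
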